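/- Fix a real parameter η ≥ 1 and a real number r with 0 ≤ r ≤ 1. For α_sr ∈ [0,η] and f ∈ [0,1], let W(α_sr, f) denote the infimum of s(α₁, α₂, α_sr) over all (α₁, α₂) ∈ [0,1] × [0,1] satisfying min(I_S((α₁,α₂,α_sr), f), I_D((α₁,α₂,α_sr), f)) ≤ r. Then inf_{α_sr ∈ [0,η]} max_{f ∈ [0,1]} W(α_sr, f) = min{η+2, 4} − 3r. -/

import Mathlib

open Set

/-- The SNR exponent `s(α)` of the joint density of channel exponents
`α = (α₁, α₂, α_sr)`. -/
noncomputable def sExp (η : ℝ) (a : ℝ × ℝ × ℝ) : ℝ :=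
  if a.1 + a.2.1 ≤ 1 then η + 4 - 3 * a.1 - 2 * a.2.1 - a.2.2
  else η + 3 - 2 * a.1 - a.2.1 - a.2.2

/-- Source-side cut mutual information exponent `I_S(α, f)`. -/
noncomputable def IS (a : ℝ × ℝ × ℝ) (f : ℝ) : ℝ :=
  a.1 + f * max (a.2.2 - a.1) 0

/-- Destination-side cut mutual information exponent `I_D(α, f)`. -/
noncomputable def ID (a : ℝ × ℝ × ℝ) (f : ℝ) : ℝ :=
  a.1 + (1 - f) * a.2.1

/-- The local-scheduling inner value `W(α_sr, f)`: the infimum of `s` over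
the channel exponents `(α₁, α₂)` putting the network in outage at
multiplexing gain `r`, for a given source-relay exponent `α_sr` and
schedule `f`. -/
noncomputable def Wlocal (η r αsr f : ℝ) : ℝ :=
  sInf {x : ℝ | ∃ α₁ ∈ Icc (0:ℝ) 1, ∃ α₂ ∈ Icc (0:ℝ) 1,
    min (IS (α₁, α₂, αsr) f) (ID (α₁, α₂, αsr) f) ≤ r ∧ sExp η (α₁, α₂, αsr) = x}

/-- The outage-value set appearing in `Wlocal`. -/
def WSet (η r αsr f : ℝ) : Set ℝ :=
  {x : ℝ | ∃ α₁ ∈ Icc (0:ℝ) 1, ∃ α₂ ∈ Icc (0:ℝ) 1,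
    min (IS (α₁, α₂, αsr) f) (ID (α₁, α₂, αsr) f) ≤ r ∧ sExp η (α₁, α₂, αsr) = x}

lemma Wlocal_eq (η r αsr f : ℝ) : Wlocal η r αsr f = sInf (WSet η r αsr f) := rfl

/-- Every outage value is at least `η - 1 - αsr`. -/
lemma wset_lb (η r αsr f : ℝ) : ∀ x ∈ WSet η r αsr f, η - 1 - αsr ≤ x := by
  rintro x ⟨α₁, ⟨h10, h11⟩, α₂, ⟨h20, h21⟩, -, rfl⟩
  simp only [sExp]
  split_ifs <;> linarith

lemma wset_bddBelow (η r αsr f : ℝ) : BddBelow (WSet η r αsr f) :=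
  ⟨η - 1 - αsr, fun x hx => wset_lb η r αsr f x hx⟩

/-- The point `(r, 0)` is always in outage, producing value `η+4-3r-αsr`. -/
lemma wset_mem_r0 (η r αsr f : ℝ) (hr0 : 0 ≤ r) (hr1 : r ≤ 1) :
    η + 4 - 3 * r - αsr ∈ WSet η r αsr f := by
  refine ⟨r, ⟨hr0, hr1⟩, 0, ⟨le_refl 0, zero_le_one⟩, ?_, ?_⟩
  · have : ID (r, 0, αsr) f = r := by simp [ID]
    calc min (IS (r, 0, αsr) f) (ID (r, 0, αsr) f) ≤ ID (r, 0, αsr) f := min_le_right _ _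
      _ = r := this
  · simp only [sExp]
    rw [if_pos (by linarith : r + (0:ℝ) ≤ 1)]
    ring

lemma wset_nonempty (η r αsr f : ℝ) (hr0 : 0 ≤ r) (hr1 : r ≤ 1) :
    (WSet η r αsr f).Nonempty :=
  ⟨_, wset_mem_r0 η r αsr f hr0 hr1⟩

lemma Wlocal_le (η r αsr f : ℝ) (hr0 : 0 ≤ r) (hr1 : r ≤ 1) :
    Wlocal η r αsr f ≤ η + 4 - 3 * r - αsr := by
  rw [Wlocal_eq]
  exact csInf_le (wset_bddBelow η r αsr f) (wset_mem_r0 η r αsr f hr0 hr1)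

/-- Key lower bound: with listening fraction `f = 1/3`, every outage point
has SNR exponent at least `min (η+2) 4 - 3r`. -/
lemma key_lb (η r αsr : ℝ) (hr0 : 0 ≤ r) (hs0 : 0 ≤ αsr) (hsη : αsr ≤ η) :
    ∀ x ∈ WSet η r αsr (1/3), min (η + 2) 4 - 3 * r ≤ x := by
  rintro x ⟨α₁, ⟨h10, h11⟩, α₂, ⟨h20, h21⟩, hout, rfl⟩
  rcases min_le_iff.mp hout with h | h
  · -- source-side outage : 2α₁ + αsr ≤ 3r
    have hkey : 2 * α₁ + αsr ≤ 3 * r := by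
      simp only [IS] at h
      rcases le_or_gt (αsr - α₁) 0 with hm | hm
      · rw [max_eq_right hm] at h
        have : α₁ ≤ r := by linarith
        linarith
      · rw [max_eq_left hm.le] at h
        linarith
    have hmin : min (η + 2) 4 ≤ η + 2 := min_le_left _ _
    simp only [sExp]
    split_ifs with hb <;> [skip; push_neg at hb] <;> linarith
  · -- destination-side outage : 3α₁ + 2α₂ ≤ 3r
    have hkey : 3 * α₁ + 2 * α₂ ≤ 3 * r := by
      simp only [ID] at h
      linarith
    have hmin : min (η + 2) 4 ≤ 4 := min_le_right _ _
    simp only [sExp]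
    split_ifs with hb <;> [skip; push_neg at hb] <;> linarith

lemma Wlocal_third_ge (η r αsr : ℝ) (hr0 : 0 ≤ r) (hr1 : r ≤ 1)
    (hs0 : 0 ≤ αsr) (hsη : αsr ≤ η) :
    min (η + 2) 4 - 3 * r ≤ Wlocal η r αsr (1/3) := by
  rw [Wlocal_eq]
  exact le_csInf (wset_nonempty η r αsr (1/3) hr0 hr1) (key_lb η r αsr hr0 hs0 hsη)

/-- For `αsr = r`, the point `(r, 1)` is in outage for every `f`,
giving value `η + 2 - 3r`. -/
lemma Wlocal_le_r (η r f : ℝ) (hr0 : 0 ≤ r) (hr1 : r ≤ 1) :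
    Wlocal η r r f ≤ η + 2 - 3 * r := by
  rw [Wlocal_eq]
  refine csInf_le (wset_bddBelow η r r f) ⟨r, ⟨hr0, hr1⟩, 1, ⟨zero_le_one, le_refl 1⟩, ?_, ?_⟩
  · have : IS (r, 1, r) f = r := by
      simp [IS, max_eq_right (by linarith : r - r ≤ 0)]
    calc min (IS (r, 1, r) f) (ID (r, 1, r) f) ≤ IS (r, 1, r) f := min_le_left _ _
      _ = r := this
  · simp only [sExp]
    split_ifs with hb
    · have : r = 0 := le_antisymm (by linarith) hr0
      rw [this]; ring
    · ring

/-- In the low-rate region `r ≤ 1`, local scheduling (where the schedule `f`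
may depend only on `α_sr`) achieves the optimal DMT:
`inf_{α_sr ∈ [0,η]} max_{f ∈ [0,1]} W(α_sr, f) = min{η+2, 4} − 3r`. -/
theorem local_schedule_optimal (η r : ℝ) (hη : 1 ≤ η) (hr0 : 0 ≤ r) (hr1 : r ≤ 1) :
    sInf {m : ℝ | ∃ αsr ∈ Icc (0:ℝ) η,
        m = sSup {w : ℝ | ∃ f ∈ Icc (0:ℝ) 1, w = Wlocal η r αsr f}} =
      min (η + 2) 4 - 3 * r := by
  set V := min (η + 2) 4 - 3 * r with hV
  have hthird : (1/3 : ℝ) ∈ Icc (0:ℝ) 1 := ⟨by norm_num, by norm_num⟩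
  -- the inner f-set and its properties
  have fset_bdd : ∀ αsr : ℝ, BddAbove {w : ℝ | ∃ f ∈ Icc (0:ℝ) 1, w = Wlocal η r αsr f} := by
    intro αsr
    refine ⟨η + 4 - 3 * r - αsr, ?_⟩
    rintro w ⟨f, -, rfl⟩
    exact Wlocal_le η r αsr f hr0 hr1
  have fset_ne : ∀ αsr : ℝ, Set.Nonempty {w : ℝ | ∃ f ∈ Icc (0:ℝ) 1, w = Wlocal η r αsr f} :=
    fun αsr => ⟨Wlocal η r αsr (1/3), 1/3, hthird, rfl⟩
  -- every member of the outer set is ≥ V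
  have hub : ∀ m ∈ {m : ℝ | ∃ αsr ∈ Icc (0:ℝ) η,
      m = sSup {w : ℝ | ∃ f ∈ Icc (0:ℝ) 1, w = Wlocal η r αsr f}}, V ≤ m := by
    rintro m ⟨αsr, ⟨hs0, hsη⟩, rfl⟩
    calc V ≤ Wlocal η r αsr (1/3) := Wlocal_third_ge η r αsr hr0 hr1 hs0 hsη
      _ ≤ sSup _ := le_csSup (fset_bdd αsr) ⟨1/3, hthird, rfl⟩
  -- nonempty outer set
  have outer_ne : Set.Nonempty {m : ℝ | ∃ αsr ∈ Icc (0:ℝ) η,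
      m = sSup {w : ℝ | ∃ f ∈ Icc (0:ℝ) 1, w = Wlocal η r αsr f}} :=
    ⟨_, ⟨0, ⟨le_refl 0, by linarith⟩, rfl⟩⟩
  refine le_antisymm ?_ (le_csInf outer_ne hub)
  -- upper bound: exhibit a worst αsr achieving exactly V
  by_cases hcase : η ≤ 2
  · -- αsr* = r, V = η + 2 - 3r
    have hVeq : V = η + 2 - 3 * r := by
      rw [hV, min_eq_left (by linarith : η + 2 ≤ 4)]
    have hmem : V ∈ {m : ℝ | ∃ αsr ∈ Icc (0:ℝ) η,
        m = sSup {w : ℝ | ∃ f ∈ Icc (0:ℝ) 1, w = Wlocal η r αsr f}} := by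
      refine ⟨r, ⟨hr0, by linarith⟩, ?_⟩
      refine le_antisymm ?_ ?_
      · calc V ≤ Wlocal η r r (1/3) := Wlocal_third_ge η r r hr0 hr1 hr0 (by linarith)
          _ ≤ sSup _ := le_csSup (fset_bdd r) ⟨1/3, hthird, rfl⟩
      · refine csSup_le (fset_ne r) ?_
        rintro w ⟨f, -, rfl⟩
        rw [hVeq]
        exact Wlocal_le_r η r f hr0 hr1
    exact csInf_le ⟨V, hub⟩ hmem
  · -- αsr* = η, V = 4 - 3r
    push_neg at hcase
    have hVeq : V = 4 - 3 * r := by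
      rw [hV, min_eq_right (by linarith : (4:ℝ) ≤ η + 2)]
    have hmem : V ∈ {m : ℝ | ∃ αsr ∈ Icc (0:ℝ) η,
        m = sSup {w : ℝ | ∃ f ∈ Icc (0:ℝ) 1, w = Wlocal η r αsr f}} := by
      refine ⟨η, ⟨by linarith, le_refl η⟩, ?_⟩
      refine le_antisymm ?_ ?_
      · calc V ≤ Wlocal η r η (1/3) := Wlocal_third_ge η r η hr0 hr1 (by linarith) (le_refl η)
          _ ≤ sSup _ := le_csSup (fset_bdd η) ⟨1/3, hthird, rfl⟩
      · refine csSup_le (fset_ne η) ?_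
        rintro w ⟨f, -, rfl⟩
        have := Wlocal_le η r η f hr0 hr1
        rw [hVeq]; linarith
    exact csInf_le ⟨V, hub⟩ hmem
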